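/- arXiv:1701.02576 — 2 statements merged into one kernel-verified Lean document; each statement's English description precedes it below -/
import Mathlib

section
/- For every real x ∈ ℝ and every compactly supported C^1 function g : ℝ → ℝ, one has |g(x)|³ ≤ 3 · min(∫_{-∞}^{x} g², ∫_{x}^{∞} g²) · sup |g'|. -/
open MeasureTheory Set

/-- For every `x ∈ ℝ` and every compactly supported `C^1` function `g : ℝ → ℝ`,
`|g(x)|³ ≤ 3 · min(∫_{-∞}^x g², ∫_x^∞ g²) · sup |g'|`. -/
theorem stmt1 (g : ℝ → ℝ) (hg : ContDiff ℝ 1 g) (hsupp : HasCompactSupport g) (x : ℝ) :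
    |g x| ^ 3 ≤
      3 * min (∫ t in Set.Iic x, g t ^ 2) (∫ t in Set.Ici x, g t ^ 2) *
        ⨆ t : ℝ, |deriv g t| := by
  set M := ⨆ t : ℝ, |deriv g t| with hMdef
  have hg' : Continuous (deriv g) := hg.continuous_deriv le_rfl
  have hbdd : BddAbove (Set.range fun t => |deriv g t|) := by
    simpa [Real.norm_eq_abs] using
      hg'.norm.bddAbove_range_of_hasCompactSupport hsupp.deriv.norm
  have hM : ∀ t, |deriv g t| ≤ M := fun t => le_ciSup hbdd t
  have hM0 : 0 ≤ M := le_trans (abs_nonneg _) (hM 0)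
  -- the cube function
  have hf : ContDiff ℝ 1 (fun t => g t ^ 3) := hg.pow 3
  have hfs : HasCompactSupport (fun t => g t ^ 3) := by
    have := hsupp.comp_left (g := fun y : ℝ => y ^ 3) (by simp)
    exact this
  have hderiv : deriv (fun t => g t ^ 3) = fun t => 3 * g t ^ 2 * deriv g t := by
    funext t
    have h := ((hg.differentiable (by norm_num) t).hasDerivAt.pow 3)
    simpa [Pi.pow_def] using h.deriv
  -- integrability facts
  have hg2cont : Continuous (fun t => g t ^ 2) := hg.continuous.pow 2
  have hg2supp : HasCompactSupport (fun t => g t ^ 2) := by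
    have := hsupp.comp_left (g := fun y : ℝ => y ^ 2) (by simp)
    exact this
  have hg2int : Integrable (fun t => g t ^ 2) := hg2cont.integrable_of_hasCompactSupport hg2supp
  have hprodcont : Continuous (fun t => 3 * g t ^ 2 * deriv g t) :=
    (continuous_const.mul hg2cont).mul hg'
  have hprodint : Integrable (fun t => |3 * g t ^ 2 * deriv g t|) := by
    have : Integrable (fun t => 3 * g t ^ 2 * deriv g t) :=
      hprodcont.integrable_of_hasCompactSupport (by exact hsupp.deriv.mul_left)
    exact this.abs
  have hbnd : ∀ μ : Measure ℝ, Integrable (fun t => |3 * g t ^ 2 * deriv g t|) μ →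
      Integrable (fun t => g t ^ 2) μ →
      (∫ t, |3 * g t ^ 2 * deriv g t| ∂μ) ≤ 3 * (∫ t, g t ^ 2 ∂μ) * M := by
    intro μ h1 h2
    calc (∫ t, |3 * g t ^ 2 * deriv g t| ∂μ)
        ≤ ∫ t, 3 * g t ^ 2 * M ∂μ := by
          refine integral_mono h1 ((h2.const_mul 3).mul_const M) fun t => ?_
          have : |3 * g t ^ 2 * deriv g t| = 3 * g t ^ 2 * |deriv g t| := by
            rw [abs_mul, abs_of_nonneg (by positivity : (0:ℝ) ≤ 3 * g t ^ 2)]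
          rw [this]
          exact mul_le_mul_of_nonneg_left (hM t) (by positivity)
      _ = 3 * (∫ t, g t ^ 2 ∂μ) * M := by
          rw [integral_mul_const, integral_const_mul]
  -- left bound
  have hleft : |g x| ^ 3 ≤ 3 * (∫ t in Set.Iic x, g t ^ 2) * M := by
    have key : (∫ t in Iic x, 3 * g t ^ 2 * deriv g t) = g x ^ 3 := by
      rw [← hderiv]; exact hfs.integral_Iic_deriv_eq hf x
    calc |g x| ^ 3 = |∫ t in Iic x, 3 * g t ^ 2 * deriv g t| := by
          rw [key, abs_pow]
      _ ≤ ∫ t in Iic x, |3 * g t ^ 2 * deriv g t| := by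
          exact
            norm_integral_le_integral_norm (μ := volume.restrict (Iic x))
              (fun t => 3 * g t ^ 2 * deriv g t)
      _ ≤ 3 * (∫ t in Iic x, g t ^ 2) * M :=
          hbnd _ hprodint.restrict hg2int.restrict
  -- right bound
  have hright : |g x| ^ 3 ≤ 3 * (∫ t in Set.Ici x, g t ^ 2) * M := by
    have key : (∫ t in Ioi x, 3 * g t ^ 2 * deriv g t) = -(g x ^ 3) := by
      rw [← hderiv]; exact hfs.integral_Ioi_deriv_eq hf x
    have hIci : (∫ t in Ici x, g t ^ 2) = ∫ t in Ioi x, g t ^ 2 :=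
      integral_Ici_eq_integral_Ioi
    calc |g x| ^ 3 = |∫ t in Ioi x, 3 * g t ^ 2 * deriv g t| := by
          rw [key, abs_neg, abs_pow]
      _ ≤ ∫ t in Ioi x, |3 * g t ^ 2 * deriv g t| := by
          exact
            norm_integral_le_integral_norm (μ := volume.restrict (Ioi x))
              (fun t => 3 * g t ^ 2 * deriv g t)
      _ ≤ 3 * (∫ t in Ioi x, g t ^ 2) * M :=
          hbnd _ hprodint.restrict hg2int.restrict
      _ = 3 * (∫ t in Ici x, g t ^ 2) * M := by rw [hIci]
  rcases le_total (∫ t in Set.Iic x, g t ^ 2) (∫ t in Set.Ici x, g t ^ 2) with h | h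
  · rwa [min_eq_left h]
  · rwa [min_eq_right h]
end

section
/- Let ω⋆ > 0 and a > 0, and set m₁ = −√(2ω⋆ + 2a). If m : [T₁, T) → ℝ is C^1, satisfies m(T₁) = m₁, m'(t) < 0, and m'(t) < ψ(t)·(−m(t)²/2 + ω⋆) whenever m(t) ≤ m₁, where ψ : [T₁,∞) → (0,∞) is continuous with ∫_{T₁}^∞ ψ(s) ds = ∞, then m(t) → −∞ at some finite time T⁺ < ∞. -/
/-- Blow-up for the strict Riccati differential inequality: if `m(T₁) = −√(2ω⋆+2a)`,
`m' < 0`, and `m' < ψ·(−m²/2 + ω⋆)` whenever `m ≤ −√(2ω⋆+2a)`, with `ψ > 0`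
continuous of divergent integral, then `m` cannot be globally defined on `[T₁,∞)`
(it blows up to `−∞` in finite time). -/
theorem stmt19 (ω a T₁ : ℝ) (hω : 0 < ω) (ha : 0 < a)
    (ψ m m' : ℝ → ℝ)
    (hψc : ContinuousOn ψ (Set.Ici T₁)) (hψpos : ∀ t ∈ Set.Ici T₁, 0 < ψ t)
    (hψdiv : Filter.Tendsto (fun t => ∫ s in T₁..t, ψ s) Filter.atTop Filter.atTop)
    (hm : ∀ t ∈ Set.Ici T₁, HasDerivAt m (m' t) t)
    (hm1 : m T₁ = -Real.sqrt (2 * ω + 2 * a))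
    (hneg : ∀ t ∈ Set.Ici T₁, m' t < 0)
    (hric : ∀ t ∈ Set.Ici T₁, m t ≤ -Real.sqrt (2 * ω + 2 * a) →
      m' t < ψ t * (-(m t) ^ 2 / 2 + ω)) :
    False := by
  have hKpos : (0:ℝ) < 2 * ω + 2 * a := by linarith
  have hsqrtpos : 0 < Real.sqrt (2 * ω + 2 * a) := Real.sqrt_pos.mpr hKpos
  have hsq : Real.sqrt (2 * ω + 2 * a) ^ 2 = 2 * ω + 2 * a := Real.sq_sqrt hKpos.le
  -- m is continuous on Ici T₁
  have hmc : ContinuousOn m (Set.Ici T₁) := fun t ht =>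
    ((hm t ht).continuousAt).continuousWithinAt
  -- m is strictly decreasing
  have hanti : StrictAntiOn m (Set.Ici T₁) := by
    apply strictAntiOn_of_deriv_neg (convex_Ici T₁) hmc
    intro x hx
    rw [interior_Ici] at hx
    rw [(hm x (Set.mem_Ici.mpr (Set.mem_Ioi.mp hx).le)).deriv]
    exact hneg x (Set.mem_Ici.mpr (Set.mem_Ioi.mp hx).le)
  have hle : ∀ t ∈ Set.Ici T₁, m t ≤ -Real.sqrt (2 * ω + 2 * a) := by
    intro t ht
    rcases eq_or_lt_of_le (Set.mem_Ici.mp ht) with h | h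
    · rw [← h, hm1]
    · have := hanti Set.self_mem_Ici ht h
      rw [hm1] at this; exact this.le
  have hmneg : ∀ t ∈ Set.Ici T₁, m t < 0 := fun t ht =>
    lt_of_le_of_lt (hle t ht) (by linarith)
  have hmsq : ∀ t ∈ Set.Ici T₁, 2 * ω + 2 * a ≤ (m t) ^ 2 := by
    intro t ht
    have h1 : Real.sqrt (2 * ω + 2 * a) ≤ -(m t) := by linarith [hle t ht]
    calc 2 * ω + 2 * a = Real.sqrt (2 * ω + 2 * a) ^ 2 := hsq.symm
      _ ≤ (-(m t)) ^ 2 := pow_le_pow_left₀ hsqrtpos.le h1 2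
      _ = (m t) ^ 2 := by ring
  set c : ℝ := a / (2 * (ω + a)) with hcdef
  have hd : (0:ℝ) < 2 * (ω + a) := by linarith
  have hc : 0 < c := div_pos ha hd
  have hc1 : c * (2 * (ω + a)) = a := div_mul_cancel₀ a (ne_of_gt hd)
  -- the key differential inequality for v = -(m)⁻¹
  have key : ∀ t ∈ Set.Ici T₁, m' t / (m t) ^ 2 < -(c * ψ t) := by
    intro t ht
    have hψ := hψpos t ht
    have h2 := hric t ht (hle t ht)
    have hmt := hmneg t ht
    have hsqpos : 0 < (m t) ^ 2 := by nlinarith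
    have hquad : -(m t) ^ 2 / 2 + ω ≤ -c * (m t) ^ 2 := by
      nlinarith [hmsq t ht]
    have h3 : m' t < -(c * ψ t) * (m t) ^ 2 := by
      calc m' t < ψ t * (-(m t) ^ 2 / 2 + ω) := h2
        _ ≤ ψ t * (-c * (m t) ^ 2) := by
            exact mul_le_mul_of_nonneg_left hquad hψ.le
        _ = -(c * ψ t) * (m t) ^ 2 := by ring
    exact (div_lt_iff₀ hsqpos).mpr h3
  -- derivative of v = -(m)⁻¹
  have hv : ∀ t ∈ Set.Ici T₁,
      HasDerivAt (fun s => -(m s)⁻¹) (m' t / (m t) ^ 2) t := by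
    intro t ht
    have := ((hm t ht).inv (ne_of_lt (hmneg t ht))).neg
    rw [show m' t / m t ^ 2 = -(-m' t / m t ^ 2) by ring]
    exact this
  have hvT₁pos : 0 < -(m T₁)⁻¹ := by
    have := hmneg T₁ Set.self_mem_Ici
    simpa using inv_lt_zero'.mpr this
  -- pick b large enough
  obtain ⟨b, hbT, hbint⟩ : ∃ b, T₁ + 1 ≤ b ∧ -(m T₁)⁻¹ / c ≤ ∫ s in T₁..b, ψ s := by
    have h1 := hψdiv.eventually_ge_atTop (-(m T₁)⁻¹ / c)
    have h2 := Filter.eventually_ge_atTop (T₁ + 1)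
    obtain ⟨b, hb1, hb2⟩ := (h2.and h1).exists
    exact ⟨b, hb1, hb2⟩
  have hT₁b : T₁ < b := by linarith
  -- w = v + c * primitive of ψ is strictly decreasing on Icc T₁ b
  set w : ℝ → ℝ := fun t => -(m t)⁻¹ + c * ∫ s in T₁..t, ψ s with hwdef
  have hwanti : StrictAntiOn w (Set.Icc T₁ b) := by
    apply strictAntiOn_of_deriv_neg (convex_Icc T₁ b)
    · apply ContinuousOn.add
      · exact fun t ht => ((hv t ht.1).continuousAt).continuousWithinAt
      · apply ContinuousOn.mul continuousOn_const
        have hint : MeasureTheory.IntegrableOn ψ (Set.uIcc T₁ b) := by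
          rw [Set.uIcc_of_le hT₁b.le]
          exact (hψc.mono (Set.Icc_subset_Ici_self)).integrableOn_compact isCompact_Icc
        exact (intervalIntegral.continuousOn_primitive_interval hint).mono
          (by rw [Set.uIcc_of_le hT₁b.le])
    · intro x hx
      rw [interior_Icc] at hx
      have hxI : x ∈ Set.Ici T₁ := le_of_lt hx.1
      have hcontAt : ∀ y ∈ Set.Ioi T₁, ContinuousAt ψ y := fun y hy =>
        (hψc y (Set.mem_Ici.mpr (le_of_lt (Set.mem_Ioi.mp hy)))).continuousAt (Ici_mem_nhds (Set.mem_Ioi.mp hy))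
      have hmeas := ContinuousAt.stronglyMeasurableAtFilter (μ := MeasureTheory.volume) isOpen_Ioi hcontAt x hx.1
      have hint : IntervalIntegrable ψ MeasureTheory.volume T₁ x :=
        (hψc.mono (by rw [Set.uIcc_of_le hx.1.le]; exact Set.Icc_subset_Ici_self)).intervalIntegrable
      have hprim : HasDerivAt (fun u => ∫ s in T₁..u, ψ s) (ψ x) x :=
        intervalIntegral.integral_hasDerivAt_right hint hmeas (hcontAt x hx.1)
      have hw : HasDerivAt w (m' x / (m x) ^ 2 + c * ψ x) x :=
        (hv x hxI).add ((hprim.const_mul c))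
      rw [hw.deriv]
      have := key x hxI
      linarith
  have hwb : w b < w T₁ := hwanti (Set.left_mem_Icc.mpr hT₁b.le) (Set.right_mem_Icc.mpr hT₁b.le) hT₁b
  have hwT₁ : w T₁ = -(m T₁)⁻¹ := by simp [hwdef]
  have hvbpos : 0 < -(m b)⁻¹ := by
    have := hmneg b (Set.mem_Ici.mpr (le_of_lt hT₁b))
    simpa using inv_lt_zero'.mpr this
  have hcint : -(m T₁)⁻¹ ≤ c * ∫ s in T₁..b, ψ s := by
    have := mul_le_mul_of_nonneg_left hbint hc.le
    rwa [mul_div_cancel₀ _ (ne_of_gt hc)] at this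
  have : w T₁ ≤ w b := by
    rw [hwT₁, hwdef]
    simp only
    linarith
  linarith
end
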